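/- Let n ≥ 3 and 2 ≤ k ≤ n−1, and suppose a real number c = ⟨u₀,u⟩ satisfies c·√((n+1)(k−1)/(nk)) − √(1−c²)·√((n−k+1)/(nk)) ≤ √((k−1)n/(k(n+1)))·c with 0 < c ≤ 1. Then c² ≤ (n+1)(n−k+1) / ((k−1) + (n+1)(n−k+1)). -/

import Mathlib

set_option maxHeartbeats 1000000


/-- For `n ≥ 3`, `2 ≤ k ≤ n−1`, and `c ∈ (0,1]` satisfying the combined
geometric constraint, one has `c² ≤ (n+1)(n−k+1)/((k−1)+(n+1)(n−k+1))`. -/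
theorem quadratic_bound_on_cos {n k : ℕ} (hn : 3 ≤ n) (hk : 2 ≤ k) (hkn : k ≤ n - 1)
    (c : ℝ) (hc0 : 0 < c) (hc1 : c ≤ 1)
    (h : c * Real.sqrt (((n : ℝ) + 1) * ((k : ℝ) - 1) / ((n : ℝ) * (k : ℝ)))
        - Real.sqrt (1 - c ^ 2) *
            Real.sqrt (((n : ℝ) - (k : ℝ) + 1) / ((n : ℝ) * (k : ℝ)))
      ≤ Real.sqrt (((k : ℝ) - 1) * (n : ℝ) / ((k : ℝ) * ((n : ℝ) + 1))) * c) :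
    c ^ 2 ≤ ((n : ℝ) + 1) * ((n : ℝ) - (k : ℝ) + 1) /
      (((k : ℝ) - 1) + ((n : ℝ) + 1) * ((n : ℝ) - (k : ℝ) + 1)) := by
  set N : ℝ := (n : ℝ) with hN
  set K : ℝ := (k : ℝ) with hK
  have hN3 : (3 : ℝ) ≤ N := by rw [hN]; exact_mod_cast hn
  have hK2 : (2 : ℝ) ≤ K := by rw [hK]; exact_mod_cast hk
  have hKN : K ≤ N - 1 := by
    have : (k : ℝ) ≤ ((n - 1 : ℕ) : ℝ) := by exact_mod_cast hkn
    have h1 : ((n - 1 : ℕ) : ℝ) = N - 1 := by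
      have : 1 ≤ n := by omega
      push_cast [Nat.cast_sub this]; ring
    linarith [this, h1.le, h1.ge]
  have hNpos : (0 : ℝ) < N := by linarith
  have hKpos : (0 : ℝ) < K := by linarith
  have hK1 : (0 : ℝ) < K - 1 := by linarith
  have hNK1 : (0 : ℝ) < N - K + 1 := by linarith
  have hN1 : (0 : ℝ) < N + 1 := by linarith
  set t : ℝ := Real.sqrt ((K - 1) / (K * N * (N + 1))) with ht
  have ht0 : 0 ≤ t := Real.sqrt_nonneg _
  have ht2 : t ^ 2 = (K - 1) / (K * N * (N + 1)) := by
    rw [ht, Real.sq_sqrt]; positivity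
  have hA : Real.sqrt ((N + 1) * (K - 1) / (N * K)) = (N + 1) * t := by
    rw [ht, ← Real.sqrt_sq hN1.le, ← Real.sqrt_mul (by positivity)]
    congr 1; field_simp; ring_nf; rw [Real.sq_sqrt (by positivity)]
  have hD : Real.sqrt ((K - 1) * N / (K * (N + 1))) = N * t := by
    rw [ht, ← Real.sqrt_sq hNpos.le, ← Real.sqrt_mul (by positivity)]
    congr 1; field_simp; ring_nf; rw [Real.sq_sqrt (by positivity)]
  set B : ℝ := Real.sqrt ((N - K + 1) / (N * K)) with hB
  have hB0 : 0 ≤ B := Real.sqrt_nonneg _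
  have hB2 : B ^ 2 = (N - K + 1) / (N * K) := by
    rw [hB, Real.sq_sqrt]; positivity
  rw [hA, hD] at h
  have hkey : c * t ≤ Real.sqrt (1 - c ^ 2) * B := by
    have e : c * ((N + 1) * t) - N * t * c = c * t := by ring
    linarith
  have hc2 : c ^ 2 ≤ 1 := by nlinarith
  have hs2 : Real.sqrt (1 - c ^ 2) ^ 2 = 1 - c ^ 2 := by
    rw [Real.sq_sqrt]; linarith
  have hsq : (c * t) ^ 2 ≤ (Real.sqrt (1 - c ^ 2) * B) ^ 2 := by
    apply pow_le_pow_left₀ (by positivity) hkey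
  have hineq : c ^ 2 * ((K - 1) / (K * N * (N + 1))) ≤
      (1 - c ^ 2) * ((N - K + 1) / (N * K)) := by
    calc c ^ 2 * ((K - 1) / (K * N * (N + 1))) = (c * t) ^ 2 := by rw [mul_pow, ht2]
      _ ≤ (Real.sqrt (1 - c ^ 2) * B) ^ 2 := hsq
      _ = (1 - c ^ 2) * ((N - K + 1) / (N * K)) := by rw [mul_pow, hs2, hB2]
  rw [le_div_iff₀ (by positivity)]
  have hclear : c ^ 2 * (K - 1) * (N * K) ≤ (1 - c ^ 2) * (N - K + 1) * (K * N * (N + 1)) := by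
    have h3 := mul_le_mul_of_nonneg_right hineq
      (show (0 : ℝ) ≤ (K * N * (N + 1)) * (N * K) by positivity)
    have hKne : K ≠ 0 := ne_of_gt hKpos
    have hNne : N ≠ 0 := ne_of_gt hNpos
    have hN1ne : N + 1 ≠ 0 := ne_of_gt hN1
    have e1 : c ^ 2 * ((K - 1) / (K * N * (N + 1))) * ((K * N * (N + 1)) * (N * K))
        = c ^ 2 * (K - 1) * (N * K) := by field_simp
    have e2 : (1 - c ^ 2) * ((N - K + 1) / (N * K)) * ((K * N * (N + 1)) * (N * K))
        = (1 - c ^ 2) * (N - K + 1) * (K * N * (N + 1)) := by field_simp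
    rw [e1, e2] at h3
    exact h3
  rw [← mul_le_mul_iff_of_pos_right (mul_pos hNpos hKpos)]
  nlinarith [hclear]
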